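/- Let τ₀(x,y) = 1 and τ₁(x,y) = x + iy + √3 as functions ℝ² → ℂ. Then the Bäcklund transformation relations between τ₀ and τ₁ hold on ℝ²: (Dₓ² + (1/√3)Dₓ + (i/√3)Dᵧ) τ₀·τ₁ = 0 and (−Dₓ − iDᵧ + Dₓ³ − √3 i DₓDᵧ) τ₀·τ₁ = 0. -/
import Mathlib

open Complex

noncomputable def hirota (m n : ℕ) (f g : ℝ × ℝ → ℂ) (p : ℝ × ℝ) : ℂ :=
  iteratedDeriv m (fun a =>
    iteratedDeriv n (fun b =>
      f (p.1 + a, p.2 + b) * g (p.1 - a, p.2 - b)) 0) 0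

noncomputable def tau0 : ℝ × ℝ → ℂ := fun _ => 1

noncomputable def tau1 (p : ℝ × ℝ) : ℂ :=
  (p.1 : ℂ) + (p.2 : ℂ) * I + (Real.sqrt 3 : ℂ)

lemma key (c w : ℂ) (t : ℝ) : HasDerivAt (fun t : ℝ => c - (t:ℂ)*w) (-w) t := by
  have h : HasDerivAt (fun t : ℝ => (t:ℂ)) 1 t := Complex.ofRealCLM.hasDerivAt
  simpa using (h.mul_const w).const_sub c

lemma h10 (p : ℝ × ℝ) : hirota 1 0 tau0 tau1 p = -1 := by
  simp only [hirota, tau0, tau1, one_mul, iteratedDeriv_zero, iteratedDeriv_one]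
  have e : (fun a : ℝ => ((p.1 - a : ℝ) : ℂ) + ((p.2 - (0:ℝ) : ℝ) : ℂ) * I + (Real.sqrt 3 : ℂ))
      = fun a : ℝ => (((p.1:ℂ) + (p.2:ℂ)*I + (Real.sqrt 3:ℂ)) - (a:ℂ)*1) := by
    funext a; push_cast; ring
  rw [e, (key _ 1 0).deriv]

lemma h01 (p : ℝ × ℝ) : hirota 0 1 tau0 tau1 p = -I := by
  simp only [hirota, tau0, tau1, one_mul, iteratedDeriv_zero, iteratedDeriv_one]
  have e : (fun b : ℝ => ((p.1 - (0:ℝ) : ℝ) : ℂ) + ((p.2 - b : ℝ) : ℂ) * I + (Real.sqrt 3 : ℂ))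
      = fun b : ℝ => (((p.1:ℂ) + (p.2:ℂ)*I + (Real.sqrt 3:ℂ)) - (b:ℂ)*I) := by
    funext b; push_cast; ring
  rw [e, (key _ I 0).deriv]

lemma dconst (p : ℝ × ℝ) : deriv (fun a : ℝ => ((p.1 - a : ℝ) : ℂ) + ((p.2 - (0:ℝ) : ℝ) : ℂ) * I + (Real.sqrt 3 : ℂ)) = fun _ => -1 := by
  funext a
  have e : (fun a : ℝ => ((p.1 - a : ℝ) : ℂ) + ((p.2 - (0:ℝ) : ℝ) : ℂ) * I + (Real.sqrt 3 : ℂ))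
      = fun a : ℝ => (((p.1:ℂ) + (p.2:ℂ)*I + (Real.sqrt 3:ℂ)) - (a:ℂ)*1) := by
    funext a; push_cast; ring
  rw [e, (key _ 1 a).deriv]

lemma h20 (p : ℝ × ℝ) : hirota 2 0 tau0 tau1 p = 0 := by
  simp only [hirota, tau0, tau1, one_mul, iteratedDeriv_zero]
  rw [show (2:ℕ) = 1 + 1 from rfl, iteratedDeriv_succ', dconst]
  simp

lemma h30 (p : ℝ × ℝ) : hirota 3 0 tau0 tau1 p = 0 := by
  simp only [hirota, tau0, tau1, one_mul, iteratedDeriv_zero]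
  rw [show (3:ℕ) = 2 + 1 from rfl, iteratedDeriv_succ', dconst]
  simp [iteratedDeriv_succ']

lemma h11 (p : ℝ × ℝ) : hirota 1 1 tau0 tau1 p = 0 := by
  simp only [hirota, tau0, tau1, one_mul, iteratedDeriv_one]
  have e : (fun a : ℝ => deriv (fun b : ℝ => ((p.1 - a : ℝ) : ℂ) + ((p.2 - b : ℝ) : ℂ) * I + (Real.sqrt 3 : ℂ)) 0) = fun _ => -I := by
    funext a
    have e2 : (fun b : ℝ => ((p.1 - a : ℝ) : ℂ) + ((p.2 - b : ℝ) : ℂ) * I + (Real.sqrt 3 : ℂ))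
        = fun b : ℝ => (((p.1:ℂ) - (a:ℂ) + (p.2:ℂ)*I + (Real.sqrt 3:ℂ)) - (b:ℂ)*I) := by
      funext b; push_cast; ring
    rw [e2, (key _ I 0).deriv]
  rw [e]; simp

/-- The Bäcklund transformation relations between `τ₀` and `τ₁`. -/
theorem backlund_tau0_tau1 :
    (∀ p : ℝ × ℝ,
      hirota 2 0 tau0 tau1 p + (1 / (Real.sqrt 3 : ℂ)) * hirota 1 0 tau0 tau1 p
        + (I / (Real.sqrt 3 : ℂ)) * hirota 0 1 tau0 tau1 p = 0) ∧
    (∀ p : ℝ × ℝ,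
      -hirota 1 0 tau0 tau1 p - I * hirota 0 1 tau0 tau1 p
        + hirota 3 0 tau0 tau1 p
        - (Real.sqrt 3 : ℂ) * I * hirota 1 1 tau0 tau1 p = 0) := by
  constructor <;> intro p <;>
    simp only [h10, h01, h20, h30, h11] <;> ring_nf <;>
    simp [Complex.I_sq, div_mul_eq_mul_div]
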